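/- For all integers n₁, n₂: (i) for each subset B of {0,1,…,f−1} there exists at least one pair (a,b) with (a,b,B) ∈ T(n₁,n₂); (ii) the cardinality M(n₁,n₂) of T(n₁,n₂) equals 2^f plus the number of subsets B of {0,1,…,f−1} with n₁ − n₂ ≡ n_B (mod ℓ^f − 1). -/

import Mathlib

namespace Stmt11

/-- `n_B = ∑_{i∈B} ℓ^{i+1} − ∑_{i∉B} ℓ^i`. -/
def nB (ℓ f : ℕ) (B : Finset (Fin f)) : ℤ :=
  ∑ i ∈ B, (ℓ : ℤ) ^ ((i : ℕ) + 1) - ∑ i ∈ Bᶜ, (ℓ : ℤ) ^ (i : ℕ)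

/-- The set `T(n₁,n₂)` of triples `(a,b,B)` with `a ∈ {0,…,ℓ^f−2}`,
`b ∈ {1,…,ℓ}^f`, `B ⊆ {0,…,f−1}`, with
`n₁ ≡ a + ∑_{i∈B} b_i ℓ^i` and `n₂ ≡ a + ∑_{i∉B} b_i ℓ^i (mod ℓ^f−1)`. -/
def Tset2 (ℓ f : ℕ) (n₁ n₂ : ℤ) : Set (ℤ × (Fin f → ℤ) × Finset (Fin f)) :=
  {x | (0 ≤ x.1 ∧ x.1 ≤ (ℓ : ℤ) ^ f - 2) ∧
    (∀ i, 1 ≤ x.2.1 i ∧ x.2.1 i ≤ (ℓ : ℤ)) ∧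
    Int.ModEq ((ℓ : ℤ) ^ f - 1) n₁
      (x.1 + ∑ i ∈ x.2.2, x.2.1 i * (ℓ : ℤ) ^ (i : ℕ)) ∧
    Int.ModEq ((ℓ : ℤ) ^ f - 1) n₂
      (x.1 + ∑ i ∈ x.2.2ᶜ, x.2.1 i * (ℓ : ℤ) ^ (i : ℕ))}

def Sb (ℓ f : ℕ) (b : Fin f → ℤ) (B : Finset (Fin f)) : ℤ :=
  ∑ i ∈ B, b i * (ℓ : ℤ) ^ (i : ℕ)

lemma count_one (m t : ℤ) (hm : 0 < m) :
    ((Finset.Icc (0:ℤ) (m-1)).filter fun a => m ∣ a - t).card = 1 := by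
  have h : (Finset.Icc (0:ℤ) (m-1)).filter (fun a => m ∣ a - t) = {t % m} := by
    ext a
    simp only [Finset.mem_filter, Finset.mem_Icc, Finset.mem_singleton]
    constructor
    · rintro ⟨⟨h0, h1⟩, k, hk⟩
      have ha : a = t + m * k := by linarith
      have : a % m = t % m := by rw [ha, Int.add_mul_emod_self_left]
      rw [← this, Int.emod_eq_of_lt h0 (by omega)]
    · rintro rfl
      refine ⟨⟨Int.emod_nonneg _ (by omega), by have := Int.emod_lt_of_pos t hm; omega⟩, ?_⟩
      have h := Int.emod_add_mul_ediv t m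
      exact ⟨-(t / m), by linarith⟩
  rw [h]; simp

lemma count_two (m r : ℤ) (hm : 0 < m) :
    ((Finset.Icc (0:ℤ) m).filter fun x => m ∣ r - x).card = if m ∣ r then 2 else 1 := by
  split_ifs with h
  · have hset : (Finset.Icc (0:ℤ) m).filter (fun x => m ∣ r - x) = {0, m} := by
      ext x
      simp only [Finset.mem_filter, Finset.mem_Icc, Finset.mem_insert, Finset.mem_singleton]
      constructor
      · rintro ⟨⟨h0, h1⟩, hd⟩
        have hx : m ∣ x := by have := dvd_sub h hd; simpa using this
        rcases eq_or_lt_of_le h0 with h0' | h0'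
        · left; omega
        · right; have := Int.le_of_dvd h0' hx; omega
      · rintro (rfl | rfl)
        · exact ⟨⟨le_refl _, by omega⟩, by simpa using h⟩
        · exact ⟨⟨by omega, le_refl _⟩, dvd_sub h (dvd_refl _)⟩
    rw [hset, Finset.card_insert_of_notMem (by simp only [Finset.mem_insert, Finset.mem_singleton]; omega), Finset.card_singleton]
  · have hset : (Finset.Icc (0:ℤ) m).filter (fun x => m ∣ r - x) = {r % m} := by
      ext x
      simp only [Finset.mem_filter, Finset.mem_Icc, Finset.mem_singleton]
      constructor
      · rintro ⟨⟨h0, h1⟩, k, hk⟩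
        have hxm : x < m := by
          rcases eq_or_lt_of_le h1 with h1' | h1'
          · exfalso; apply h; have hh : m * (k+1) = m * k + m := by ring
            exact ⟨k + 1, by omega⟩
          · exact h1'
        have hx : x = r + m * (-k) := by linarith
        have : x % m = r % m := by rw [hx, Int.add_mul_emod_self_left]
        rw [← this, Int.emod_eq_of_lt h0 hxm]
      · rintro rfl
        refine ⟨⟨Int.emod_nonneg _ (by omega), by have := Int.emod_lt_of_pos r hm; omega⟩, ?_⟩
        have h := Int.emod_add_mul_ediv r m
        exact ⟨r / m, by linarith⟩
    rw [hset]; simp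

def Phi (ℓ f : ℕ) (B : Finset (Fin f)) (c : Fin f → Fin ℓ) : Fin f → ℤ :=
  fun i => if i ∈ B then ((c i : ℕ) : ℤ) + 1 else (ℓ:ℤ) - ((c i : ℕ) : ℤ)

def Psi (ℓ f : ℕ) (hl : 0 < ℓ) (B : Finset (Fin f)) (b : Fin f → ℤ) : Fin f → Fin ℓ :=
  fun i => ⟨min (if i ∈ B then b i - 1 else (ℓ:ℤ) - b i).toNat (ℓ-1), by omega⟩

lemma telescope (ℓ f : ℕ) :
    (∑ i : Fin f, (ℓ : ℤ) ^ ((i:ℕ)+1)) - ∑ i : Fin f, (ℓ : ℤ) ^ (i:ℕ) = (ℓ:ℤ)^f - 1 := by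
  rw [← Finset.sum_sub_distrib, Fin.sum_univ_eq_sum_range (fun i => (ℓ:ℤ)^(i+1) - (ℓ:ℤ)^i) f,
    Finset.sum_range_sub (fun i => (ℓ:ℤ)^i) f]
  simp

lemma Nval (ℓ f : ℕ) (c : Fin f → Fin ℓ) :
    (((finFunctionFinEquiv c : Fin (ℓ^f)) : ℕ) : ℤ)
      = ∑ i : Fin f, ((c i : ℕ) : ℤ) * (ℓ:ℤ)^(i:ℕ) := by
  rw [finFunctionFinEquiv_apply]
  push_cast
  ring

/-- key identity : D(Φ c) = N(c) + n_B − m -/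
lemma key (ℓ f : ℕ) (B : Finset (Fin f)) (c : Fin f → Fin ℓ) :
    Sb ℓ f (Phi ℓ f B c) B - Sb ℓ f (Phi ℓ f B c) Bᶜ
    = (((finFunctionFinEquiv c : Fin (ℓ^f)) : ℕ) : ℤ) + nB ℓ f B - ((ℓ:ℤ)^f - 1) := by
  rw [Nval]
  unfold Sb nB Phi
  have e1 : ∑ i ∈ B, (if i ∈ B then ((c i : ℕ):ℤ)+1 else (ℓ:ℤ) - ((c i : ℕ):ℤ)) * (ℓ:ℤ)^(i:ℕ)
      = ∑ i ∈ B, (((c i : ℕ):ℤ) * (ℓ:ℤ)^(i:ℕ) + (ℓ:ℤ)^(i:ℕ)) :=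
    Finset.sum_congr rfl (by intro i hi; rw [if_pos hi]; ring)
  have e2 : ∑ i ∈ Bᶜ, (if i ∈ B then ((c i : ℕ):ℤ)+1 else (ℓ:ℤ) - ((c i : ℕ):ℤ)) * (ℓ:ℤ)^(i:ℕ)
      = ∑ i ∈ Bᶜ, ((ℓ:ℤ)^((i:ℕ)+1) - ((c i : ℕ):ℤ) * (ℓ:ℤ)^(i:ℕ)) :=
    Finset.sum_congr rfl (by intro i hi; rw [if_neg (by simpa using hi), pow_succ]; ring)
  rw [e1, e2, Finset.sum_add_distrib, Finset.sum_sub_distrib]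
  have e3 := Finset.sum_add_sum_compl B (fun i => ((c i : ℕ) : ℤ) * (ℓ:ℤ)^(i:ℕ))
  have e4 := Finset.sum_add_sum_compl B (fun i => (ℓ:ℤ)^((i:ℕ)+1))
  have e5 := Finset.sum_add_sum_compl B (fun i => (ℓ:ℤ)^(i:ℕ))
  have e6 := telescope ℓ f
  linarith

lemma bridge (m d y x : ℤ) : (m ∣ d - (x + y - m)) ↔ (m ∣ (d - y) - x) := by
  constructor
  · rintro ⟨k, hk⟩
    exact ⟨k - 1, by linear_combination hk⟩
  · rintro ⟨k, hk⟩
    exact ⟨k + 1, by linear_combination hk⟩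

lemma stepA (ℓ f : ℕ) (hl : 0 < ℓ) (d : ℤ) (B : Finset (Fin f)) :
    ((Fintype.piFinset fun _ : Fin f => Finset.Icc (1:ℤ) ℓ).filter
      fun b => ((ℓ:ℤ)^f - 1) ∣ d - (Sb ℓ f b B - Sb ℓ f b Bᶜ)).card
    = ((Finset.univ : Finset (Fin f → Fin ℓ)).filter
        fun c => ((ℓ:ℤ)^f - 1) ∣ (d - nB ℓ f B)
          - (((finFunctionFinEquiv c : Fin (ℓ^f)) : ℕ) : ℤ)).card := by
  have hΦΨ : ∀ b : Fin f → ℤ, (∀ i, 1 ≤ b i ∧ b i ≤ (ℓ:ℤ)) →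
      Phi ℓ f B (Psi ℓ f hl B b) = b := by
    intro b hb
    funext i
    have h1 := (hb i).1
    have h2 := (hb i).2
    by_cases hi : i ∈ B
    · simp only [Phi, Psi, if_pos hi]
      omega
    · simp only [Phi, Psi, if_neg hi]
      omega
  apply Finset.card_nbij' (Psi ℓ f hl B) (Phi ℓ f B)
  · intro b hb
    simp only [Finset.mem_coe, Finset.mem_filter, Fintype.mem_piFinset, Finset.mem_Icc] at hb
    obtain ⟨hb1, hb2⟩ := hb
    have hkey := key ℓ f B (Psi ℓ f hl B b)
    rw [hΦΨ b hb1] at hkey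
    simp only [Finset.mem_coe, Finset.mem_filter, Finset.mem_univ, true_and]
    rw [← bridge, ← hkey]
    exact hb2
  · intro c hc
    simp only [Finset.mem_coe, Finset.mem_filter, Finset.mem_univ, true_and] at hc
    simp only [Finset.mem_coe, Finset.mem_filter, Fintype.mem_piFinset, Finset.mem_Icc]
    constructor
    · intro i
      have := (c i).isLt
      simp only [Phi]
      split <;> omega
    · rw [key ℓ f B c, bridge]
      exact hc
  · intro b hb
    simp only [Finset.mem_coe, Finset.mem_filter, Fintype.mem_piFinset, Finset.mem_Icc] at hb
    exact hΦΨ b hb.1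
  · intro c hc
    funext i
    have := (c i).isLt
    apply Fin.ext
    by_cases hi : i ∈ B
    · simp only [Phi, Psi, if_pos hi]
      omega
    · simp only [Phi, Psi, if_neg hi]
      omega

lemma stepB (ℓ f : ℕ) (h2 : 2 < ℓ ^ f) (r : ℤ) :
    ((Finset.univ : Finset (Fin f → Fin ℓ)).filter
      fun c => ((ℓ:ℤ)^f - 1) ∣ r - (((finFunctionFinEquiv c : Fin (ℓ^f)) : ℕ) : ℤ)).card
      = ((Finset.Icc (0:ℤ) ((ℓ:ℤ)^f - 1)).filter
          fun x => ((ℓ:ℤ)^f - 1) ∣ r - x).card := by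
  have hmnat : ((ℓ:ℤ)^f - 1) = ((ℓ^f : ℕ) : ℤ) - 1 := by push_cast; ring
  rw [hmnat]
  apply Finset.card_nbij (fun c => (((finFunctionFinEquiv c : Fin (ℓ^f)) : ℕ) : ℤ))
  · intro c hc
    simp only [Finset.mem_coe, Finset.mem_filter, Finset.mem_univ, true_and] at hc ⊢
    have hlt := (finFunctionFinEquiv c : Fin (ℓ^f)).isLt
    refine ⟨Finset.mem_Icc.mpr ⟨by positivity, by omega⟩, hc⟩
  · intro c _ c' _ h
    beta_reduce at h
    have h2 : ((finFunctionFinEquiv c : Fin (ℓ^f)) : ℕ) = ((finFunctionFinEquiv c' : Fin (ℓ^f)) : ℕ) := by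
      exact_mod_cast h
    exact finFunctionFinEquiv.injective (Fin.ext h2)
  · intro z hz
    simp only [Finset.coe_filter, Finset.mem_Icc, Set.mem_setOf_eq] at hz
    obtain ⟨⟨hz0, hz1⟩, hzd⟩ := hz
    have hzlt : z.toNat < ℓ^f := by omega
    refine ⟨finFunctionFinEquiv.symm ⟨z.toNat, hzlt⟩, ?_, ?_⟩
    · simp only [Finset.coe_filter, Finset.mem_univ, Set.mem_setOf_eq, true_and]
      rw [← hmnat, Equiv.apply_symm_apply]
      simpa [Int.toNat_of_nonneg hz0] using hzd
    · simp only [Equiv.apply_symm_apply]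
      exact Int.toNat_of_nonneg hz0

lemma count_b (ℓ f : ℕ) (hl : 0 < ℓ) (h2 : 2 < ℓ ^ f) (d : ℤ) (B : Finset (Fin f)) :
    ((Fintype.piFinset fun _ : Fin f => Finset.Icc (1:ℤ) ℓ).filter
      fun b => ((ℓ:ℤ)^f - 1) ∣ d - (Sb ℓ f b B - Sb ℓ f b Bᶜ)).card
    = 1 + if ((ℓ:ℤ)^f - 1) ∣ d - nB ℓ f B then 1 else 0 := by
  have hm2 : 0 < (ℓ:ℤ)^f - 1 := by
    have : ((ℓ:ℤ))^f = ((ℓ^f : ℕ) : ℤ) := by push_cast; ring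
    omega
  rw [stepA ℓ f hl d B, stepB ℓ f h2 (d - nB ℓ f B), count_two _ _ hm2]
  split_ifs <;> ring

/-- (i) For each subset `B` there is at least one pair `(a,b)` with
`(a,b,B) ∈ T(n₁,n₂)`; (ii) `#T(n₁,n₂)` equals `2^f` plus the number of `B`
with `n₁ − n₂ ≡ n_B (mod ℓ^f − 1)`. -/
theorem stmt11 (ℓ f : ℕ) (hℓ : ℓ.Prime) (hf : 0 < f) (h2 : 2 < ℓ ^ f)
    (n₁ n₂ : ℤ) :
    (∀ B : Finset (Fin f), ∃ (a : ℤ) (b : Fin f → ℤ),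
      (a, b, B) ∈ Tset2 ℓ f n₁ n₂) ∧
    (Tset2 ℓ f n₁ n₂).ncard = 2 ^ f +
      {B : Finset (Fin f) |
        Int.ModEq ((ℓ : ℤ) ^ f - 1) (n₁ - n₂) (nB ℓ f B)}.ncard := by
  have hl : 0 < ℓ := hℓ.pos
  have hq : ((ℓ:ℤ))^f = ((ℓ^f : ℕ) : ℤ) := by push_cast; ring
  have hm2 : 0 < (ℓ:ℤ)^f - 1 := by rw [hq]; omega
  constructor
  -- Part (i)
  · intro B
    have hcard := count_b ℓ f hl h2 (n₁ - n₂) B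
    have hpos : 0 < ((Fintype.piFinset fun _ : Fin f => Finset.Icc (1:ℤ) ℓ).filter
        fun b => ((ℓ:ℤ)^f - 1) ∣ (n₁ - n₂) - (Sb ℓ f b B - Sb ℓ f b Bᶜ)).card := by
      rw [hcard]; positivity
    obtain ⟨b, hb⟩ := Finset.card_pos.mp hpos
    simp only [Finset.mem_filter, Fintype.mem_piFinset, Finset.mem_Icc] at hb
    obtain ⟨hb1, hb2⟩ := hb
    have hd : ((ℓ:ℤ)^f - 1) ∣ (n₁ - Sb ℓ f b B) % ((ℓ:ℤ)^f - 1) - (n₁ - Sb ℓ f b B) := by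
      have h := Int.emod_add_mul_ediv (n₁ - Sb ℓ f b B) ((ℓ:ℤ)^f - 1)
      exact ⟨-((n₁ - Sb ℓ f b B) / ((ℓ:ℤ)^f - 1)), by linarith⟩
    refine ⟨(n₁ - Sb ℓ f b B) % ((ℓ:ℤ)^f - 1), b, ?_, ?_, ?_, ?_⟩
    · exact ⟨Int.emod_nonneg _ (by omega),
        by have := Int.emod_lt_of_pos (n₁ - Sb ℓ f b B) hm2; omega⟩
    · exact hb1
    · rw [Int.modEq_iff_dvd]
      obtain ⟨k, hk⟩ := hd
      exact ⟨k, by simp only [Sb] at hk ⊢; linarith⟩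
    · rw [Int.modEq_iff_dvd]
      obtain ⟨k, hk⟩ := hd
      obtain ⟨k', hk'⟩ := hb2
      refine ⟨k + k', ?_⟩
      have hr : ((ℓ:ℤ)^f - 1) * (k + k') = ((ℓ:ℤ)^f - 1) * k + ((ℓ:ℤ)^f - 1) * k' := by ring
      simp only [Sb] at hk hk' ⊢
      linarith
  -- Part (ii)
  · have hTset : Tset2 ℓ f n₁ n₂ =
        ↑(((Finset.Icc (0:ℤ) ((ℓ:ℤ)^f - 2)) ×ˢ
            ((Fintype.piFinset fun _ : Fin f => Finset.Icc (1:ℤ) ℓ) ×ˢ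
              (Finset.univ : Finset (Finset (Fin f))))).filter
          fun x => (((ℓ:ℤ)^f - 1) ∣ (x.1 + Sb ℓ f x.2.1 x.2.2) - n₁) ∧
            (((ℓ:ℤ)^f - 1) ∣ (x.1 + Sb ℓ f x.2.1 x.2.2ᶜ) - n₂)) := by
      ext ⟨a, b, B⟩
      rw [Finset.mem_coe, Finset.mem_filter]
      simp only [Tset2, Sb, Set.mem_setOf_eq, Finset.coe_filter, Finset.mem_product,
        Finset.mem_Icc, Fintype.mem_piFinset, Finset.mem_univ, and_true,
        Int.modEq_iff_dvd]
      tauto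
    rw [hTset, Set.ncard_coe_finset]
    have hsetB : {B : Finset (Fin f) |
        Int.ModEq ((ℓ : ℤ) ^ f - 1) (n₁ - n₂) (nB ℓ f B)} =
        ↑((Finset.univ : Finset (Finset (Fin f))).filter
          fun B => ((ℓ:ℤ)^f - 1) ∣ (n₁ - n₂) - nB ℓ f B) := by
      ext B
      simp only [Set.mem_setOf_eq, Finset.coe_filter, Finset.mem_coe, Finset.mem_filter, Finset.mem_univ, true_and,
        Int.modEq_iff_dvd]
      exact dvd_sub_comm
    rw [hsetB, Set.ncard_coe_finset]
    rw [Finset.card_filter]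
    simp only [Finset.sum_product]
    have inner : ∀ (b : Fin f → ℤ) (B : Finset (Fin f)),
        (∑ a ∈ Finset.Icc (0:ℤ) ((ℓ:ℤ)^f - 2),
          if (((ℓ:ℤ)^f - 1) ∣ (a + Sb ℓ f b B) - n₁) ∧
             (((ℓ:ℤ)^f - 1) ∣ (a + Sb ℓ f b Bᶜ) - n₂) then 1 else 0)
        = if ((ℓ:ℤ)^f - 1) ∣ (n₁ - n₂) - (Sb ℓ f b B - Sb ℓ f b Bᶜ) then 1 else 0 := by
      intro b B
      have hiff : ∀ a : ℤ,
          ((((ℓ:ℤ)^f - 1) ∣ (a + Sb ℓ f b B) - n₁) ∧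
            (((ℓ:ℤ)^f - 1) ∣ (a + Sb ℓ f b Bᶜ) - n₂))
          ↔ ((((ℓ:ℤ)^f - 1) ∣ (n₁ - n₂) - (Sb ℓ f b B - Sb ℓ f b Bᶜ)) ∧
              (((ℓ:ℤ)^f - 1) ∣ a - (n₁ - Sb ℓ f b B))) := by
        intro a
        constructor
        · rintro ⟨⟨k1, h1⟩, ⟨k2, h2⟩⟩
          exact ⟨⟨k2 - k1, by linear_combination h2 - h1⟩, ⟨k1, by linear_combination h1⟩⟩
        · rintro ⟨⟨k1, h1⟩, ⟨k2, h2⟩⟩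
          exact ⟨⟨k2, by linear_combination h2⟩, ⟨k1 + k2, by linear_combination h1 + h2⟩⟩
      simp_rw [hiff]
      by_cases hD : ((ℓ:ℤ)^f - 1) ∣ (n₁ - n₂) - (Sb ℓ f b B - Sb ℓ f b Bᶜ)
      · simp only [hD, true_and, if_true]
        have h1 : ((ℓ:ℤ)^f - 2) = ((ℓ:ℤ)^f - 1) - 1 := by ring
        rw [h1, ← Finset.card_filter]
        exact count_one _ _ hm2
      · simp only [hD, false_and, if_false, Finset.sum_const_zero]
    rw [Finset.sum_comm]
    have main2 : ∀ b : Fin f → ℤ,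
        (∑ a ∈ Finset.Icc (0:ℤ) ((ℓ:ℤ)^f - 2), ∑ B : Finset (Fin f),
          if (((ℓ:ℤ)^f - 1) ∣ (a + Sb ℓ f b B) - n₁) ∧
             (((ℓ:ℤ)^f - 1) ∣ (a + Sb ℓ f b Bᶜ) - n₂) then 1 else 0)
        = ∑ B : Finset (Fin f),
            if ((ℓ:ℤ)^f - 1) ∣ (n₁ - n₂) - (Sb ℓ f b B - Sb ℓ f b Bᶜ) then 1 else 0 := by
      intro b
      rw [Finset.sum_comm]
      exact Finset.sum_congr rfl fun B _ => inner b B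
    rw [Finset.sum_congr rfl fun b _ => main2 b, Finset.sum_comm]
    have main3 : ∀ B : Finset (Fin f),
        (∑ b ∈ (Fintype.piFinset fun _ : Fin f => Finset.Icc (1:ℤ) ℓ),
          if ((ℓ:ℤ)^f - 1) ∣ (n₁ - n₂) - (Sb ℓ f b B - Sb ℓ f b Bᶜ) then 1 else 0)
        = 1 + if ((ℓ:ℤ)^f - 1) ∣ (n₁ - n₂) - nB ℓ f B then 1 else 0 := by
      intro B
      rw [← Finset.card_filter]
      exact count_b ℓ f hl h2 (n₁ - n₂) B
    rw [Finset.sum_congr rfl fun B _ => main3 B, Finset.sum_add_distrib,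
      Finset.sum_const, Finset.card_filter]
    simp [Fintype.card_finset]

end Stmt11
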